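/- arXiv:2511.02867 — 2 statements merged into one kernel-verified Lean document; each statement's English description precedes it below -/
import Mathlib

section
/- The function t ↦ (1/t) ∫₀ᵗ Z_s Z_{t-s} / Z_t ds is decreasing on (0, ∞). -/
open MeasureTheory Real Set intervalIntegral

/-- Laplace transform of a measure on ℝ. -/
noncomputable def lapZ (μ : Measure ℝ) (t : ℝ) : ℝ := ∫ x, Real.exp (-t * x) ∂μ

section aux

variable {μ : Measure ℝ} [IsProbabilityMeasure μ] {c : ℝ}

lemma lapZ_ae (hc : μ (Set.Iio c) = 0) : ∀ᵐ x ∂μ, c ≤ x := by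
  have := measure_eq_zero_iff_ae_notMem.mp hc
  filter_upwards [this] with x hx
  simpa [Set.mem_Iio, not_lt] using hx

lemma lapZ_integrable (hc : μ (Set.Iio c) = 0) {t : ℝ} (ht : 0 ≤ t) :
    Integrable (fun x => Real.exp (-t * x)) μ := by
  refine Integrable.mono' (integrable_const (Real.exp (-t * c)))
    ((Real.continuous_exp.comp (continuous_const.mul continuous_id)).aestronglyMeasurable) ?_
  filter_upwards [lapZ_ae hc] with x hx
  rw [Real.norm_of_nonneg (Real.exp_pos _).le]
  exact Real.exp_le_exp.mpr (by nlinarith)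

lemma lapZ_pos (hc : μ (Set.Iio c) = 0) {t : ℝ} (ht : 0 ≤ t) : 0 < lapZ μ t := by
  have h := integral_pos_iff_support_of_nonneg (μ := μ)
    (f := fun x : ℝ => Real.exp (-t * x)) (fun x => (Real.exp_pos _).le)
    (lapZ_integrable hc ht)
  rw [lapZ, h]
  have hsupp : (Function.support fun x : ℝ => Real.exp (-(t * x))) = Set.univ := by
    ext x
    simp only [Function.mem_support, Set.mem_univ, iff_true]
    exact (Real.exp_pos _).ne'
  simp only [neg_mul, hsupp]
  simp

lemma lapZ_zero : lapZ μ 0 = 1 := by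
  simp [lapZ]

lemma lapZ_holder (hc : μ (Set.Iio c) = 0) {s t a b : ℝ} (hs : 0 ≤ s) (ht : 0 ≤ t)
    (ha : 0 < a) (hb : 0 < b) (hab : a + b = 1) :
    lapZ μ (a * s + b * t) ≤ lapZ μ s ^ a * lapZ μ t ^ b := by
  have ha1 : a < 1 := by linarith
  have hpq : (1 / a).HolderConjugate (1 / b) :=
    ⟨by rw [one_div, one_div, inv_inv, inv_inv, inv_one]; exact hab, by positivity, by positivity⟩
  set g : ℝ → ℝ := fun x => Real.exp (-(a * s) * x) with hg
  set h : ℝ → ℝ := fun x => Real.exp (-(b * t) * x) with hh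
  have memg : ∀ {u v : ℝ}, 0 < u → 0 ≤ v →
      MemLp (fun x => Real.exp (-(u * v) * x)) (ENNReal.ofReal (1 / u)) μ := by
    intro u v hu hv
    have A : ENNReal.ofReal (1 / u) ≠ 0 := by
      rw [Ne, ENNReal.ofReal_eq_zero, not_le]; positivity
    have B : ENNReal.ofReal (1 / u) ≠ ⊤ := ENNReal.ofReal_ne_top
    have meas : AEStronglyMeasurable (fun x => Real.exp (-(u * v) * x)) μ :=
      (Real.continuous_exp.comp (continuous_const.mul continuous_id)).aestronglyMeasurable
    rw [← memLp_norm_rpow_iff meas A B, ENNReal.toReal_ofReal (by positivity),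
      ENNReal.div_self A B, memLp_one_iff_integrable]
    have : (fun x => ‖Real.exp (-(u * v) * x)‖ ^ (1 / u)) = fun x => Real.exp (-v * x) := by
      funext x
      rw [Real.norm_of_nonneg (Real.exp_pos _).le, ← Real.exp_mul]
      congr 1
      field_simp
    rw [this]
    exact lapZ_integrable hc hv
  have key := MeasureTheory.integral_mul_le_Lp_mul_Lq_of_nonneg hpq
    (Filter.Eventually.of_forall fun x => (Real.exp_pos _).le)
    (Filter.Eventually.of_forall fun x => (Real.exp_pos _).le)
    (memg ha hs) (memg hb ht)
  have e1 : (∫ x, g x * h x ∂μ) = lapZ μ (a * s + b * t) := by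
    rw [lapZ]
    congr 1; funext x
    rw [hg, hh, ← Real.exp_add]
    congr 1; ring
  have e2 : (∫ x, g x ^ (1 / a) ∂μ) = lapZ μ s := by
    rw [lapZ]; congr 1; funext x
    rw [hg, ← Real.exp_mul]; congr 1; field_simp
  have e3 : (∫ x, h x ^ (1 / b) ∂μ) = lapZ μ t := by
    rw [lapZ]; congr 1; funext x
    rw [hh, ← Real.exp_mul]; congr 1; field_simp
  rw [e1, e2, e3] at key
  simpa [one_div, inv_inv] using key

lemma lapZ_logConvex (hc : μ (Set.Iio c) = 0) :
    ConvexOn ℝ (Set.Ici 0) (fun t => Real.log (lapZ μ t)) := by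
  refine convexOn_iff_forall_pos.mpr ⟨convex_Ici _, fun x hx y hy a b ha hb hab => ?_⟩
  simp only [smul_eq_mul]
  have hx' : (0:ℝ) ≤ x := hx
  have hy' : (0:ℝ) ≤ y := hy
  have hxy : 0 ≤ a * x + b * y := by positivity
  rw [← Real.log_rpow (lapZ_pos hc hx'), ← Real.log_rpow (lapZ_pos hc hy'), ← Real.log_mul
    (Real.rpow_pos_of_pos (lapZ_pos hc hx') a).ne' (Real.rpow_pos_of_pos (lapZ_pos hc hy') b).ne']
  exact Real.log_le_log (lapZ_pos hc hxy) (lapZ_holder hc hx' hy' ha hb hab)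

/-- General slope comparison for convex functions on `Ici 0`. -/
lemma slope4 {f : ℝ → ℝ} (hf : ConvexOn ℝ (Set.Ici 0) f) {x1 x2 y1 y2 : ℝ}
    (hx1 : 0 ≤ x1) (h11 : x1 ≤ y1) (h22 : x2 ≤ y2) (hx12 : x1 < x2) (hy12 : y1 < y2) :
    (f x2 - f x1) / (x2 - x1) ≤ (f y2 - f y1) / (y2 - y1) := by
  have hy1' : (0:ℝ) ≤ y1 := le_trans hx1 h11
  have hx2' : (0:ℝ) ≤ x2 := le_trans hx1 hx12.le
  have hy2' : (0:ℝ) ≤ y2 := le_trans hy1' hy12.le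
  have step1 : (f x2 - f x1) / (x2 - x1) ≤ (f y2 - f x1) / (y2 - x1) :=
    hf.secant_mono hx1 hx2' hy2' hx12.ne' (lt_of_le_of_lt h11 hy12).ne' h22
  have step2 : (f x1 - f y2) / (x1 - y2) ≤ (f y1 - f y2) / (y1 - y2) :=
    hf.secant_mono hy2' hx1 hy1' (lt_of_le_of_lt h11 hy12).ne hy12.ne h11
  have e1 : (f x1 - f y2) / (x1 - y2) = (f y2 - f x1) / (y2 - x1) := by
    rw [← neg_div_neg_eq]; ring_nf
  have e2 : (f y1 - f y2) / (y1 - y2) = (f y2 - f y1) / (y2 - y1) := by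
    rw [← neg_div_neg_eq]; ring_nf
  rw [e1, e2] at step2
  linarith

/-- Key convexity inequality. -/
lemma keyK {f : ℝ → ℝ} (hf : ConvexOn ℝ (Set.Ici 0) f) (hf0 : f 0 = 0) {a b t1 t2 : ℝ}
    (ha : 0 ≤ a) (hb : 0 ≤ b) (hab : a + b = 1) (ht1 : 0 < t1) (h12 : t1 ≤ t2) :
    f (t2 * a) + f (t2 * b) - f t2 ≤ f (t1 * a) + f (t1 * b) - f t1 := by
  rcases eq_or_lt_of_le h12 with rfl | hlt
  · exact le_refl _
  rcases eq_or_lt_of_le ha with rfl | ha'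
  · have hb1 : b = 1 := by linarith
    subst hb1
    simp [hf0]
  rcases eq_or_lt_of_le hb with rfl | hb'
  · have ha1 : a = 1 := by linarith
    subst ha1
    simp [hf0]
  have ha1 : a < 1 := by linarith
  have hb1 : b < 1 := by linarith
  have hSa : (f (t2 * a) - f (t1 * a)) / (t2 * a - t1 * a) ≤ (f t2 - f t1) / (t2 - t1) :=
    slope4 hf (by positivity) (by nlinarith) (by nlinarith)
      (by nlinarith) hlt
  have hSb : (f (t2 * b) - f (t1 * b)) / (t2 * b - t1 * b) ≤ (f t2 - f t1) / (t2 - t1) :=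
    slope4 hf (by positivity) (by nlinarith) (by nlinarith)
      (by nlinarith) hlt
  have hda : (0:ℝ) < t2 * a - t1 * a := by nlinarith
  have hdb : (0:ℝ) < t2 * b - t1 * b := by nlinarith
  have hd : (0:ℝ) < t2 - t1 := by linarith
  rw [div_le_div_iff₀ hda hd] at hSa
  rw [div_le_div_iff₀ hdb hd] at hSb
  have e : (f t2 - f t1) * (t2 * a - t1 * a) + (f t2 - f t1) * (t2 * b - t1 * b)
      = (f t2 - f t1) * (t2 - t1) := by
    linear_combination (f t2 - f t1) * (t2 - t1) * hab
  have key : (f (t2 * a) + f (t2 * b) - f t2 - (f (t1 * a) + f (t1 * b) - f t1))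
      * (t2 - t1) ≤ 0 := by nlinarith [hSa, hSb, e]
  nlinarith [key, hd]

lemma lapZ_continuousOn (hc : μ (Set.Iio c) = 0) {T : ℝ} (hT : 0 ≤ T) :
    ContinuousOn (lapZ μ) (Set.Icc 0 T) := by
  set clamp : ℝ → ℝ := fun s => max 0 (min s T) with hclamp
  have hclamp_mem : ∀ s, clamp s ∈ Set.Icc 0 T := fun s =>
    ⟨le_max_left _ _, max_le hT (min_le_right _ _)⟩
  have hG : Continuous fun s => lapZ μ (clamp s) := by
    simp only [lapZ]
    apply MeasureTheory.continuous_of_dominated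
      (bound := fun _ => max 1 (Real.exp (-T * c)))
    · intro s
      exact (Real.continuous_exp.comp
        (continuous_const.mul continuous_id)).aestronglyMeasurable
    · intro s
      filter_upwards [lapZ_ae hc] with x hx
      rw [Real.norm_of_nonneg (Real.exp_pos _).le]
      rcases le_or_gt 0 x with hx0 | hx0
      · refine le_trans ?_ (le_max_left _ _)
        rw [← Real.exp_zero]
        apply Real.exp_le_exp.mpr
        have := (hclamp_mem s).1
        nlinarith
      · refine le_trans ?_ (le_max_right _ _)
        apply Real.exp_le_exp.mpr
        have := (hclamp_mem s).2
        nlinarith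
    · exact integrable_const _
    · refine Filter.Eventually.of_forall fun x => ?_
      have : Continuous clamp :=
        continuous_const.max ((continuous_id.min continuous_const))
      exact Real.continuous_exp.comp ((this.neg).mul continuous_const)
  refine hG.continuousOn.congr fun s hs => ?_
  have : clamp s = s := by
    rw [hclamp]
    simp only
    rw [min_eq_left hs.2, max_eq_right hs.1]
  show lapZ μ s = lapZ μ (clamp s)
  rw [this]

end aux

/-- The function `t ↦ (1/t) ∫₀ᵗ Z_s Z_{t-s} / Z_t ds` is decreasing on `(0, ∞)`. -/
theorem stmt_3 (μ : Measure ℝ) [IsProbabilityMeasure μ]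
    (hbdd : ∃ c : ℝ, μ (Set.Iio c) = 0) :
    AntitoneOn (fun t => (1 / t) * ∫ s in (0:ℝ)..t, lapZ μ s * lapZ μ (t - s) / lapZ μ t)
      (Set.Ioi 0) := by
  obtain ⟨c, hc⟩ := hbdd
  -- rewrite via change of variables
  have hrw : ∀ t : ℝ, 0 < t →
      (1 / t) * (∫ s in (0:ℝ)..t, lapZ μ s * lapZ μ (t - s) / lapZ μ t)
        = ∫ u in (0:ℝ)..1, lapZ μ (t * u) * lapZ μ (t - t * u) / lapZ μ t := by
    intro t ht
    rw [intervalIntegral.integral_comp_mul_left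
      (fun s => lapZ μ s * lapZ μ (t - s) / lapZ μ t) ht.ne']
    simp [smul_eq_mul, one_div]
  -- continuity/integrability of the integrand on [0,1]
  have hcontZ : ∀ t : ℝ, 0 < t → ContinuousOn (lapZ μ) (Set.Icc 0 t) :=
    fun t ht => lapZ_continuousOn hc ht.le
  have hInt : ∀ t : ℝ, 0 < t →
      IntervalIntegrable (fun u => lapZ μ (t * u) * lapZ μ (t - t * u) / lapZ μ t)
        MeasureTheory.volume 0 1 := by
    intro t ht
    apply ContinuousOn.intervalIntegrable
    rw [Set.uIcc_of_le zero_le_one]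
    have hmap1 : Set.MapsTo (fun u : ℝ => t * u) (Set.Icc 0 1) (Set.Icc 0 t) :=
      fun u hu => ⟨mul_nonneg ht.le hu.1, mul_le_of_le_one_right ht.le hu.2⟩
    have hmap2 : Set.MapsTo (fun u : ℝ => t - t * u) (Set.Icc 0 1) (Set.Icc 0 t) :=
      fun u hu => ⟨sub_nonneg.mpr (mul_le_of_le_one_right ht.le hu.2),
        sub_le_self _ (mul_nonneg ht.le hu.1)⟩
    have c1 : ContinuousOn (fun u : ℝ => lapZ μ (t * u)) (Set.Icc 0 1) :=
      (hcontZ t ht).comp (continuous_const.mul continuous_id).continuousOn hmap1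
    have c2 : ContinuousOn (fun u : ℝ => lapZ μ (t - t * u)) (Set.Icc 0 1) :=
      (hcontZ t ht).comp
        (continuous_const.sub (continuous_const.mul continuous_id)).continuousOn hmap2
    exact (c1.mul c2).div_const _
  -- pointwise monotonicity
  intro t1 ht1 t2 ht2 h12
  simp only [Set.mem_Ioi] at ht1 ht2
  simp only
  rw [hrw t1 ht1, hrw t2 ht2]
  apply intervalIntegral.integral_mono_on zero_le_one (hInt t2 ht2) (hInt t1 ht1)
  intro u hu
  have hu0 := hu.1
  have hu1 := hu.2
  -- key pointwise inequality
  have hZpos : ∀ {s : ℝ}, 0 ≤ s → 0 < lapZ μ s := fun hs => lapZ_pos hc hs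
  have hf := lapZ_logConvex hc
  have hf0 : Real.log (lapZ μ 0) = 0 := by rw [lapZ_zero]; exact Real.log_one
  have hkey := keyK hf hf0 hu0 (by linarith : (0:ℝ) ≤ 1 - u) (by ring) ht1 h12
  have e : ∀ t : ℝ, 0 < t → lapZ μ (t * u) * lapZ μ (t - t * u) / lapZ μ t
      = Real.exp (Real.log (lapZ μ (t * u)) + Real.log (lapZ μ (t * (1 - u)))
          - Real.log (lapZ μ t)) := by
    intro t ht
    have h1 : (0:ℝ) ≤ t * u := by positivity
    have h2 : (0:ℝ) ≤ t * (1 - u) := by nlinarith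
    rw [Real.exp_sub, Real.exp_add, Real.exp_log (hZpos h1), Real.exp_log (hZpos h2),
      Real.exp_log (hZpos ht.le)]
    have : t - t * u = t * (1 - u) := by ring
    rw [this]
  rw [e t1 ht1, e t2 ht2]
  exact Real.exp_le_exp.mpr hkey
end

section
/- For any κ ∈ (0, 1), the atom of μ at the bottom E of its support is given by μ({E}) = lim_{t→∞} Z_{κt} Z_{(1-κ)t} / Z_t. -/
open MeasureTheory Real Set Filter

noncomputable def Lz (μ : Measure ℝ) (s : ℝ) : ENNReal := ∫⁻ x, ENNReal.ofReal (Real.exp (-s * x)) ∂μ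

lemma lapZ_eq (μ : Measure ℝ) (s : ℝ) : lapZ μ s = (Lz μ s).toReal := by
  rw [lapZ, Lz, integral_eq_lintegral_of_nonneg_ae]
  · exact Eventually.of_forall fun x => (Real.exp_pos _).le
  · exact (Real.continuous_exp.comp (continuous_const.mul continuous_id)).aestronglyMeasurable

lemma ae_ge {μ : Measure ℝ} {E : ℝ} (hE0 : μ (Set.Iio E) = 0) : ∀ᵐ x ∂μ, E ≤ x := by
  rw [ae_iff]
  convert hE0 using 2
  ext x; simp [Set.Iio, not_le]

lemma expMeas (s : ℝ) : Measurable fun x : ℝ => ENNReal.ofReal (Real.exp (-s * x)) :=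
  (ENNReal.measurable_ofReal.comp (Real.continuous_exp.comp (continuous_const.mul continuous_id)).measurable)

lemma Lz_le {μ : Measure ℝ} [IsProbabilityMeasure μ] {E : ℝ} (hE0 : μ (Set.Iio E) = 0)
    {s : ℝ} (hs : 0 ≤ s) : Lz μ s ≤ ENNReal.ofReal (Real.exp (-s * E)) := by
  calc Lz μ s ≤ ∫⁻ _, ENNReal.ofReal (Real.exp (-s * E)) ∂μ := by
        refine lintegral_mono_ae ((ae_ge hE0).mono fun x hx => ?_)
        exact ENNReal.ofReal_le_ofReal (Real.exp_le_exp.2 (by nlinarith))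
    _ = ENNReal.ofReal (Real.exp (-s * E)) := by simp

lemma Lz_lt_top {μ : Measure ℝ} [IsProbabilityMeasure μ] {E : ℝ} (hE0 : μ (Set.Iio E) = 0)
    {s : ℝ} (hs : 0 ≤ s) : Lz μ s < ⊤ :=
  lt_of_le_of_lt (Lz_le hE0 hs) ENNReal.ofReal_lt_top

noncomputable def Bz (μ : Measure ℝ) (E δ s : ℝ) : ENNReal :=
  ∫⁻ x in Set.Ico E (E + δ), ENNReal.ofReal (Real.exp (-s * x)) ∂μ

lemma Bz_le_Lz (μ : Measure ℝ) (E δ s : ℝ) : Bz μ E δ s ≤ Lz μ s :=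
  setLIntegral_le_lintegral _ _

lemma Bz_lower (μ : Measure ℝ) (E : ℝ) {δ : ℝ} (hδ : 0 < δ) {s : ℝ} (hs : 0 ≤ s) :
    ENNReal.ofReal (Real.exp (-s * (E + δ))) * μ (Set.Ico E (E + δ)) ≤ Bz μ E δ s := by
  rw [Bz, ← setLIntegral_const]
  refine setLIntegral_mono (expMeas s) fun x hx => ?_
  exact ENNReal.ofReal_le_ofReal (Real.exp_le_exp.2 (by nlinarith [hx.2.le]))

lemma Lz_lower (μ : Measure ℝ) (E : ℝ) {δ : ℝ} (hδ : 0 < δ) {s : ℝ} (hs : 0 ≤ s) :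
    ENNReal.ofReal (Real.exp (-s * (E + δ))) * μ (Set.Ico E (E + δ)) ≤ Lz μ s :=
  (Bz_lower μ E hδ hs).trans (Bz_le_Lz _ _ _ _)

lemma Lz_atom (μ : Measure ℝ) (E s : ℝ) :
    ENNReal.ofReal (Real.exp (-s * E)) * μ {E} ≤ Lz μ s := by
  calc ENNReal.ofReal (Real.exp (-s * E)) * μ {E}
      = ∫⁻ x in {E}, ENNReal.ofReal (Real.exp (-s * x)) ∂μ := by
        rw [lintegral_singleton]
    _ ≤ Lz μ s := setLIntegral_le_lintegral _ _

lemma Lz_split {μ : Measure ℝ} [IsProbabilityMeasure μ] {E : ℝ} (hE0 : μ (Set.Iio E) = 0)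
    {δ : ℝ} (hδ : 0 < δ) {s : ℝ} (hs : 0 ≤ s) :
    Lz μ s ≤ Bz μ E δ s + ENNReal.ofReal (Real.exp (-s * (E + δ))) := by
  have h1 : Lz μ s = ∫⁻ x in Set.Ici E, ENNReal.ofReal (Real.exp (-s * x)) ∂μ := by
    rw [Lz, ← lintegral_add_compl _ measurableSet_Ici (μ := μ)]
    have : μ (Set.Ici E)ᶜ = 0 := by rwa [Set.compl_Ici]
    rw [setLIntegral_measure_zero _ _ this, add_zero]
  have h2 : Set.Ici E = Set.Ico E (E + δ) ∪ Set.Ici (E + δ) := by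
    rw [Set.Ico_union_Ici_eq_Ici (by linarith)]
  rw [h1, h2]
  refine (lintegral_union_le _ _ _).trans ?_
  refine add_le_add le_rfl ?_
  calc ∫⁻ x in Set.Ici (E + δ), ENNReal.ofReal (Real.exp (-s * x)) ∂μ
      ≤ ∫⁻ _ in Set.Ici (E + δ), ENNReal.ofReal (Real.exp (-s * (E + δ))) ∂μ := by
        refine setLIntegral_mono (by fun_prop) fun x hx => ?_
        have hx' : E + δ ≤ x := hx
        exact ENNReal.ofReal_le_ofReal (Real.exp_le_exp.2 (by nlinarith))
    _ ≤ ENNReal.ofReal (Real.exp (-s * (E + δ))) := by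
        rw [setLIntegral_const]
        exact mul_le_of_le_one_right zero_le prob_le_one

lemma holder_Bz (μ : Measure ℝ) (E δ : ℝ) {κ t : ℝ} (hκ0 : 0 < κ) (hκ1 : κ < 1) :
    Bz μ E δ (κ * t) ≤ (Bz μ E δ t) ^ κ * (μ (Set.Ico E (E + δ))) ^ (1 - κ) := by
  have hpq : (1/κ).HolderConjugate (1/(1-κ)) := by
    rw [Real.holderConjugate_iff]
    constructor
    · rw [lt_div_iff₀ hκ0]; linarith
    · rw [one_div, one_div, inv_inv, inv_inv]; ring
  have key := ENNReal.lintegral_mul_le_Lp_mul_Lq (μ.restrict (Set.Ico E (E + δ))) hpq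
    (f := fun x => ENNReal.ofReal (Real.exp (-t * x)) ^ κ) (g := fun _ => 1)
    (((expMeas t).pow_const κ).aemeasurable) aemeasurable_const
  have h1 : ∀ x : ℝ, ENNReal.ofReal (Real.exp (-t * x)) ^ κ = ENNReal.ofReal (Real.exp (-(κ * t) * x)) := by
    intro x
    rw [ENNReal.ofReal_rpow_of_pos (Real.exp_pos _), ← Real.exp_mul]
    ring_nf
  have h2 : ∀ x : ℝ, (ENNReal.ofReal (Real.exp (-t * x)) ^ κ) ^ (1/κ) = ENNReal.ofReal (Real.exp (-t * x)) := by
    intro x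
    rw [← ENNReal.rpow_mul, mul_one_div, div_self hκ0.ne', ENNReal.rpow_one]
  simp only [h2] at key
  simp only [Pi.mul_apply, mul_one, ENNReal.one_rpow, lintegral_one,
    Measure.restrict_apply MeasurableSet.univ, Set.univ_inter, h1,
    one_div_one_div] at key
  rw [Bz, Bz]
  exact key

lemma Bz_mul_le (μ : Measure ℝ) (E δ : ℝ) {κ t : ℝ} (hκ0 : 0 < κ) (hκ1 : κ < 1) :
    Bz μ E δ (κ * t) * Bz μ E δ ((1 - κ) * t) ≤ Bz μ E δ t * μ (Set.Ico E (E + δ)) := by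
  have h1 := holder_Bz μ E δ (t := t) hκ0 hκ1
  have h2 := holder_Bz μ E δ (t := t) (κ := 1 - κ) (by linarith) (by linarith)
  have h3 : (1 : ℝ) - (1 - κ) = κ := by ring
  rw [h3] at h2
  calc Bz μ E δ (κ * t) * Bz μ E δ ((1 - κ) * t)
      ≤ ((Bz μ E δ t) ^ κ * (μ (Set.Ico E (E + δ))) ^ (1 - κ)) *
        ((Bz μ E δ t) ^ (1 - κ) * (μ (Set.Ico E (E + δ))) ^ κ) := mul_le_mul' h1 h2
    _ = ((Bz μ E δ t) ^ κ * (Bz μ E δ t) ^ (1 - κ)) *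
        ((μ (Set.Ico E (E + δ))) ^ (1 - κ) * (μ (Set.Ico E (E + δ))) ^ κ) := by ring
    _ = Bz μ E δ t * μ (Set.Ico E (E + δ)) := by
        rw [← ENNReal.rpow_add_of_nonneg _ _ hκ0.le (by linarith),
          ← ENNReal.rpow_add_of_nonneg _ _ (by linarith : (0:ℝ) ≤ 1 - κ) hκ0.le]
        norm_num

lemma lower_bound (μ : Measure ℝ) {E : ℝ} {κ t : ℝ} (hκ0 : 0 < κ) (hκ1 : κ < 1) (ht : 0 ≤ t)
    (hE0 : μ (Set.Iio E) = 0) :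
    μ {E} * Lz μ t ≤ Lz μ (κ * t) * Lz μ ((1 - κ) * t) := by
  have h1 : ENNReal.ofReal (Real.exp (-(κ * t) * E)) * μ {E} ≤ Lz μ (κ * t) := Lz_atom μ E _
  have h2 : ENNReal.ofReal (Real.exp (κ * t * E)) * Lz μ t ≤ Lz μ ((1 - κ) * t) := by
    rw [Lz, ← lintegral_const_mul _ (expMeas t)]
    refine lintegral_mono_ae ((ae_ge hE0).mono fun x hx => ?_)
    rw [← ENNReal.ofReal_mul (Real.exp_pos _).le, ← Real.exp_add]
    refine ENNReal.ofReal_le_ofReal (Real.exp_le_exp.2 ?_)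
    nlinarith [mul_le_mul_of_nonneg_left hx (mul_nonneg hκ0.le ht)]
  calc μ {E} * Lz μ t
      = (ENNReal.ofReal (Real.exp (-(κ * t) * E)) * μ {E}) *
        (ENNReal.ofReal (Real.exp (κ * t * E)) * Lz μ t) := by
        rw [mul_mul_mul_comm, ← ENNReal.ofReal_mul (Real.exp_pos _).le, ← Real.exp_add]
        norm_num
    _ ≤ Lz μ (κ * t) * Lz μ ((1 - κ) * t) := mul_le_mul' h1 h2

lemma upper_bound (μ : Measure ℝ) [IsProbabilityMeasure μ] {E : ℝ} (hE0 : μ (Set.Iio E) = 0)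
    {δ : ℝ} (hδ : 0 < δ) {κ t : ℝ} (hκ0 : 0 < κ) (hκ1 : κ < 1) (ht : 0 ≤ t) :
    Lz μ (κ * t) * Lz μ ((1 - κ) * t) ≤ Lz μ t * μ (Set.Ico E (E + δ)) +
      3 * ENNReal.ofReal (Real.exp (-t * E - min κ (1 - κ) * t * δ)) := by
  set m := min κ (1 - κ) with hm
  have hmκ : m ≤ κ := min_le_left _ _
  have hmκ' : m ≤ 1 - κ := min_le_right _ _
  have hκt : 0 ≤ κ * t := mul_nonneg hκ0.le ht
  have h1t : 0 ≤ (1 - κ) * t := mul_nonneg (by linarith) ht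
  set c := ENNReal.ofReal (Real.exp (-t * E - m * t * δ)) with hc
  set eκ := ENNReal.ofReal (Real.exp (-(κ * t) * (E + δ))) with heκ
  set e1 := ENNReal.ofReal (Real.exp (-((1 - κ) * t) * (E + δ))) with he1
  have hs1 : Lz μ (κ * t) ≤ Bz μ E δ (κ * t) + eκ := Lz_split hE0 hδ hκt
  have hs2 : Lz μ ((1 - κ) * t) ≤ Bz μ E δ ((1 - κ) * t) + e1 := Lz_split hE0 hδ h1t
  have hBκ : Bz μ E δ (κ * t) ≤ ENNReal.ofReal (Real.exp (-(κ * t) * E)) :=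
    (Bz_le_Lz _ _ _ _).trans (Lz_le hE0 hκt)
  have hB1 : Bz μ E δ ((1 - κ) * t) ≤ ENNReal.ofReal (Real.exp (-((1 - κ) * t) * E)) :=
    (Bz_le_Lz _ _ _ _).trans (Lz_le hE0 h1t)
  have cross1 : Bz μ E δ (κ * t) * e1 ≤ c := by
    refine (mul_le_mul' hBκ le_rfl).trans ?_
    rw [he1, hc, ← ENNReal.ofReal_mul (Real.exp_pos _).le, ← Real.exp_add]
    refine ENNReal.ofReal_le_ofReal (Real.exp_le_exp.2 ?_)
    nlinarith [mul_le_mul_of_nonneg_right hmκ' (mul_nonneg ht hδ.le)]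
  have cross2 : eκ * Bz μ E δ ((1 - κ) * t) ≤ c := by
    refine (mul_le_mul' le_rfl hB1).trans ?_
    rw [heκ, hc, ← ENNReal.ofReal_mul (Real.exp_pos _).le, ← Real.exp_add]
    refine ENNReal.ofReal_le_ofReal (Real.exp_le_exp.2 ?_)
    nlinarith [mul_le_mul_of_nonneg_right hmκ (mul_nonneg ht hδ.le)]
  have cross3 : eκ * e1 ≤ c := by
    rw [heκ, he1, hc, ← ENNReal.ofReal_mul (Real.exp_pos _).le, ← Real.exp_add]
    refine ENNReal.ofReal_le_ofReal (Real.exp_le_exp.2 ?_)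
    have hm1 : m ≤ 1 := by linarith
    nlinarith [mul_le_mul_of_nonneg_right hm1 (mul_nonneg ht hδ.le)]
  calc Lz μ (κ * t) * Lz μ ((1 - κ) * t)
      ≤ (Bz μ E δ (κ * t) + eκ) * (Bz μ E δ ((1 - κ) * t) + e1) := mul_le_mul' hs1 hs2
    _ = Bz μ E δ (κ * t) * Bz μ E δ ((1 - κ) * t) + Bz μ E δ (κ * t) * e1 +
        eκ * Bz μ E δ ((1 - κ) * t) + eκ * e1 := by ring
    _ ≤ Bz μ E δ t * μ (Set.Ico E (E + δ)) + c + c + c :=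
        add_le_add (add_le_add (add_le_add (Bz_mul_le μ E δ hκ0 hκ1) cross1) cross2) cross3
    _ ≤ Lz μ t * μ (Set.Ico E (E + δ)) + 3 * c := by
        have : Bz μ E δ t ≤ Lz μ t := Bz_le_Lz _ _ _ _
        calc Bz μ E δ t * μ (Set.Ico E (E + δ)) + c + c + c
            = Bz μ E δ t * μ (Set.Ico E (E + δ)) + 3 * c := by ring
          _ ≤ Lz μ t * μ (Set.Ico E (E + δ)) + 3 * c := by gcongr

/-- For `κ ∈ (0,1)`, `μ({E}) = lim_{t→∞} Z_{κt} Z_{(1-κ)t} / Z_t`, where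
`E = inf supp μ` (characterized by `μ(-∞,E) = 0` and `μ[E, E+ε) > 0` for every `ε > 0`). -/
theorem stmt_4 (μ : Measure ℝ) [IsProbabilityMeasure μ] (E : ℝ)
    (hE0 : μ (Set.Iio E) = 0) (hE1 : ∀ ε : ℝ, 0 < ε → 0 < μ (Set.Ico E (E + ε)))
    (κ : ℝ) (hκ : κ ∈ Set.Ioo (0:ℝ) 1) :
    Tendsto (fun t => lapZ μ (κ * t) * lapZ μ ((1 - κ) * t) / lapZ μ t)
      atTop (nhds (μ {E}).toReal) := by
  obtain ⟨hκ0, hκ1⟩ := hκ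
  have haf : μ {E} ≠ ⊤ := measure_ne_top μ _
  have hLz_pos : ∀ {s : ℝ}, 0 ≤ s → 0 < Lz μ s := by
    intro s hs
    refine lt_of_lt_of_le ?_ (Lz_lower μ E one_pos hs)
    exact ENNReal.mul_pos (ENNReal.ofReal_pos.2 (Real.exp_pos _)).ne' (hE1 1 one_pos).ne'
  have hlap_pos : ∀ {s : ℝ}, 0 ≤ s → 0 < lapZ μ s := by
    intro s hs
    rw [lapZ_eq]
    exact ENNReal.toReal_pos (hLz_pos hs).ne' (Lz_lt_top hE0 hs).ne
  rw [Metric.tendsto_nhds]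
  intro ε hε
  -- choose δ with μ(Ico E (E+δ)) < μ{E} + ε/2
  obtain ⟨δ, hδ, hδsmall⟩ :
      ∃ δ : ℝ, 0 < δ ∧ (μ (Set.Ico E (E + δ))).toReal < (μ {E}).toReal + ε / 2 := by
    have hanti : Antitone fun n : ℕ => Set.Ico E (E + 1 / (n + 1)) := by
      intro n k hnk
      refine Set.Ico_subset_Ico le_rfl (add_le_add_right ?_ E)
      refine one_div_le_one_div_of_le (by positivity) ?_
      have : (n : ℝ) ≤ k := by exact_mod_cast hnk
      linarith
    have hiInter : (⋂ n : ℕ, Set.Ico E (E + 1 / (n + 1))) = {E} := by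
      ext x
      simp only [Set.mem_iInter, Set.mem_Ico, Set.mem_singleton_iff]
      constructor
      · intro h
        have hle : E ≤ x := (h 0).1
        by_contra hne
        have hlt : 0 < x - E := sub_pos.2 (lt_of_le_of_ne hle (Ne.symm hne))
        obtain ⟨n, hn⟩ := exists_nat_one_div_lt hlt
        exact absurd ((h n).2) (by push_cast; linarith)
      · rintro rfl
        refine fun n => ⟨le_rfl, ?_⟩
        have : (0:ℝ) < 1 / (n + 1) := by positivity
        linarith
    have h1 : Tendsto (fun n : ℕ => μ (Set.Ico E (E + 1 / (n + 1)))) atTop (nhds (μ {E})) := by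
      have := tendsto_measure_iInter_atTop (μ := μ)
        (s := fun n : ℕ => Set.Ico E (E + 1 / (n + 1)))
        (fun n => measurableSet_Ico.nullMeasurableSet) hanti ⟨0, measure_ne_top μ _⟩
      rwa [hiInter] at this
    have h2 := (ENNReal.tendsto_toReal haf).comp h1
    have h3 := h2.eventually_lt_const (show (μ {E}).toReal < (μ {E}).toReal + ε / 2 by linarith)
    obtain ⟨n, hn⟩ := h3.exists
    exact ⟨1 / (n + 1), by positivity, hn⟩
  set m := min κ (1 - κ) with hm
  have hm0 : 0 < m := lt_min hκ0 (by linarith)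
  set c := (μ (Set.Ico E (E + m * δ / 2))).toReal with hcdef
  have hc : 0 < c := ENNReal.toReal_pos (hE1 _ (by positivity)).ne' (measure_ne_top μ _)
  -- tail tendsto 0
  have htail : Tendsto (fun t : ℝ => 3 / c * Real.exp (-(m * δ / 2) * t)) atTop (nhds 0) := by
    have hb : Tendsto (fun t : ℝ => m * δ / 2 * t) atTop atTop :=
      tendsto_id.const_mul_atTop (by positivity)
    have h1 : Tendsto (fun t : ℝ => -(m * δ / 2) * t) atTop atBot :=
      (tendsto_neg_atTop_atBot.comp hb).congr fun t => by simp [Function.comp]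
    have h2 := Real.tendsto_exp_atBot.comp h1
    have h3 := h2.const_mul (3 / c)
    simpa using h3
  have hev1 : ∀ᶠ t : ℝ in atTop, 3 / c * Real.exp (-(m * δ / 2) * t) < ε / 2 :=
    htail.eventually_lt_const (by linarith)
  filter_upwards [hev1, eventually_ge_atTop (0:ℝ)] with t htail' ht
  have hZt := hlap_pos ht
  have hκt : (0:ℝ) ≤ κ * t := mul_nonneg hκ0.le ht
  have h1t : (0:ℝ) ≤ (1 - κ) * t := mul_nonneg (by linarith) ht
  have hlow : (μ {E}).toReal * lapZ μ t ≤ lapZ μ (κ * t) * lapZ μ ((1 - κ) * t) := by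
    rw [lapZ_eq, lapZ_eq, lapZ_eq, ← ENNReal.toReal_mul, ← ENNReal.toReal_mul]
    exact ENNReal.toReal_mono (ENNReal.mul_ne_top (Lz_lt_top hE0 hκt).ne (Lz_lt_top hE0 h1t).ne)
      (lower_bound μ hκ0 hκ1 ht hE0)
  have hup : lapZ μ (κ * t) * lapZ μ ((1 - κ) * t) ≤
      lapZ μ t * (μ (Set.Ico E (E + δ))).toReal + 3 * Real.exp (-t * E - m * t * δ) := by
    have key := upper_bound μ hE0 hδ hκ0 hκ1 ht
    have hfin1 : Lz μ t * μ (Set.Ico E (E + δ)) ≠ ⊤ :=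
      ENNReal.mul_ne_top (Lz_lt_top hE0 ht).ne (measure_ne_top μ _)
    have hfin2 : (3:ENNReal) * ENNReal.ofReal (Real.exp (-t * E - m * t * δ)) ≠ ⊤ :=
      ENNReal.mul_ne_top (by simp) ENNReal.ofReal_ne_top
    have h := ENNReal.toReal_mono (ENNReal.add_ne_top.2 ⟨hfin1, hfin2⟩) key
    rw [ENNReal.toReal_add hfin1 hfin2] at h
    simp only [ENNReal.toReal_mul] at h
    rw [ENNReal.toReal_ofReal (Real.exp_pos _).le] at h
    norm_num at h
    rw [lapZ_eq, lapZ_eq, lapZ_eq]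
    rw [show -t * E - m * t * δ = -(t * E) - m * t * δ by ring]
    exact h
  have hZlow : Real.exp (-t * (E + m * δ / 2)) * c ≤ lapZ μ t := by
    have h0 := Lz_lower μ E (δ := m * δ / 2) (by positivity) ht
    have h := ENNReal.toReal_mono (Lz_lt_top hE0 ht).ne h0
    rw [ENNReal.toReal_mul, ENNReal.toReal_ofReal (Real.exp_pos _).le] at h
    rw [lapZ_eq]
    exact h
  have heq : 3 / c * Real.exp (-(m * δ / 2) * t) * (Real.exp (-t * (E + m * δ / 2)) * c)
      = 3 * Real.exp (-t * E - m * t * δ) := by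
    calc 3 / c * Real.exp (-(m * δ / 2) * t) * (Real.exp (-t * (E + m * δ / 2)) * c)
        = 3 * (Real.exp (-(m * δ / 2) * t) * Real.exp (-t * (E + m * δ / 2))) * (c / c) := by
          ring
      _ = 3 * (Real.exp (-(m * δ / 2) * t) * Real.exp (-t * (E + m * δ / 2))) := by
          rw [div_self hc.ne', mul_one]
      _ = 3 * Real.exp (-t * E - m * t * δ) := by
          rw [← Real.exp_add]
          congr 1
          ring
  have htail2 : 3 * Real.exp (-t * E - m * t * δ) ≤
      3 / c * Real.exp (-(m * δ / 2) * t) * lapZ μ t := by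
    rw [← heq]
    exact mul_le_mul_of_nonneg_left hZlow (by positivity)
  have hfinal : lapZ μ (κ * t) * lapZ μ ((1 - κ) * t) / lapZ μ t ≤
      (μ (Set.Ico E (E + δ))).toReal + 3 / c * Real.exp (-(m * δ / 2) * t) := by
    rw [div_le_iff₀ hZt]
    calc lapZ μ (κ * t) * lapZ μ ((1 - κ) * t)
        ≤ lapZ μ t * (μ (Set.Ico E (E + δ))).toReal + 3 * Real.exp (-t * E - m * t * δ) := hup
      _ ≤ lapZ μ t * (μ (Set.Ico E (E + δ))).toReal
          + 3 / c * Real.exp (-(m * δ / 2) * t) * lapZ μ t := by linarith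
      _ = ((μ (Set.Ico E (E + δ))).toReal + 3 / c * Real.exp (-(m * δ / 2) * t)) * lapZ μ t := by
          ring
  have hlow2 : (μ {E}).toReal ≤ lapZ μ (κ * t) * lapZ μ ((1 - κ) * t) / lapZ μ t := by
    rw [le_div_iff₀ hZt]
    exact hlow
  rw [Real.dist_eq, abs_lt]
  constructor <;> [linarith; linarith]
end
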